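/- Let b, p ∈ ℂ and let I ⊆ F be the two-sided ideal generated by the six elements x₂x₁ + x₁x₂, x₃x₁ + x₁x₃, x₃x₂ + x₂x₃ − b x₁x₂, x₁², x₂², and x₃² − b x₁x₃ + p x₁x₂. Then the quotient algebra F/I has ℂ-dimension 8, and the images of the eight monomials x₁^{e₁} x₂^{e₂} x₃^{e₃} with e₁, e₂, e₃ ∈ {0, 1} form a ℂ-basis of F/I. (This quotient is the Nichols algebra associated to the braiding of type R_{1,1} with t = −1.) -/

import Mathlib

/-- The free associative unital `ℂ`-algebra on three generators. -/
abbrev F : Type := FreeAlgebra ℂ (Fin 3)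

/-- The generators `x₁ = X 0`, `x₂ = X 1`, `x₃ = X 2`. -/
noncomputable def X (i : Fin 3) : F := FreeAlgebra.ι ℂ i

/-- Generators: `x₂x₁ + x₁x₂`, `x₃x₁ + x₁x₃`, `x₃x₂ + x₂x₃ − b x₁x₂`, `x₁²`, `x₂²`, `x₃² − b x₁x₃ + p x₁x₂`. -/
noncomputable def S (b p : ℂ) : Set F :=
  {X 1 * X 0 + X 0 * X 1,
   X 2 * X 0 + X 0 * X 2,
   X 2 * X 1 + X 1 * X 2 - b • (X 0 * X 1),
   X 0 * X 0,
   X 1 * X 1,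
   X 2 * X 2 - b • (X 0 * X 2) + p • (X 0 * X 1)}

/-- The relation whose two-sided-ideal closure is the ideal generated by `S`;
`RingQuot rel` is the quotient `F/I`. -/
def rel (b p : ℂ) : F → F → Prop := fun x y => x ∈ S b p ∧ y = 0

noncomputable section NicholsAux

/-! ### An explicit 8-dimensional representation -/

abbrev V8 : Type := (Fin 2 × Fin 2 × Fin 2) → ℂ

def L0 : Module.End ℂ V8 where
  toFun w := fun e => if e.1 = 1 then w (0, e.2.1, e.2.2) else 0
  map_add' u v := by funext e; by_cases h : e.1 = 1 <;> simp [h]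
  map_smul' c u := by funext e; by_cases h : e.1 = 1 <;> simp [h]

def L1 : Module.End ℂ V8 where
  toFun w := fun e =>
    if e.2.1 = 1 then (if e.1 = 0 then w (e.1, 0, e.2.2) else -w (e.1, 0, e.2.2)) else 0
  map_add' u v := by
    funext e; by_cases h : e.2.1 = 1 <;> by_cases h2 : e.1 = 0 <;> simp [h, h2] <;> ring
  map_smul' c u := by
    funext e; by_cases h : e.2.1 = 1 <;> by_cases h2 : e.1 = 0 <;> simp [h, h2] <;> ring

def L2 (b p : ℂ) : Module.End ℂ V8 where
  toFun w := fun e =>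
    if e.1 = 1 then
      if e.2.1 = 1 then
        (if e.2.2 = 1 then 2*b*w (0,1,1) + w (1,1,0) else -(p * w (0,0,1)) + b * w (0,1,0))
      else (if e.2.2 = 1 then b * w (0,0,1) - w (1,0,0) else 0)
    else
      if e.2.1 = 1 then (if e.2.2 = 1 then -w (0,1,0) else 0)
      else (if e.2.2 = 1 then w (0,0,0) else 0)
  map_add' u v := by
    funext e
    by_cases h : e.1 = 1 <;> by_cases h2 : e.2.1 = 1 <;> by_cases h3 : e.2.2 = 1 <;>
      simp [h, h2, h3] <;> ring
  map_smul' c u := by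
    funext e
    by_cases h : e.1 = 1 <;> by_cases h2 : e.2.1 = 1 <;> by_cases h3 : e.2.2 = 1 <;>
      simp [h, h2, h3] <;> ring

lemma relL1 : L1 * L0 + L0 * L1 = 0 := by
  apply LinearMap.ext; intro w; funext e
  obtain ⟨a, c, d⟩ := e
  fin_cases a <;> fin_cases c <;> fin_cases d <;>
    simp [L0, L1, Module.End.mul_apply]

lemma relL2 (b p : ℂ) : L2 b p * L0 + L0 * L2 b p = 0 := by
  apply LinearMap.ext; intro w; funext e
  obtain ⟨a, c, d⟩ := e
  fin_cases a <;> fin_cases c <;> fin_cases d <;>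
    simp [L0, L2, Module.End.mul_apply] <;> ring

lemma relL3 (b p : ℂ) : L2 b p * L1 + L1 * L2 b p - b • (L0 * L1) = 0 := by
  apply LinearMap.ext; intro w; funext e
  obtain ⟨a, c, d⟩ := e
  fin_cases a <;> fin_cases c <;> fin_cases d <;>
    simp [L0, L1, L2, Module.End.mul_apply] <;> ring

lemma relL4 : L0 * L0 = 0 := by
  apply LinearMap.ext; intro w; funext e
  obtain ⟨a, c, d⟩ := e
  fin_cases a <;> fin_cases c <;> fin_cases d <;>
    simp [L0, Module.End.mul_apply]

lemma relL5 : L1 * L1 = 0 := by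
  apply LinearMap.ext; intro w; funext e
  obtain ⟨a, c, d⟩ := e
  fin_cases a <;> fin_cases c <;> fin_cases d <;>
    simp [L1, Module.End.mul_apply]

lemma relL6 (b p : ℂ) : L2 b p * L2 b p - b • (L0 * L2 b p) + p • (L0 * L1) = 0 := by
  apply LinearMap.ext; intro w; funext e
  obtain ⟨a, c, d⟩ := e
  fin_cases a <;> fin_cases c <;> fin_cases d <;>
    simp [L0, L1, L2, Module.End.mul_apply] <;> ring

def rho (b p : ℂ) : F →ₐ[ℂ] Module.End ℂ V8 :=
  FreeAlgebra.lift ℂ ![L0, L1, L2 b p]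

lemma rho_X0 (b p : ℂ) : rho b p (X 0) = L0 := by
  simp [rho, X, FreeAlgebra.lift_ι_apply]

lemma rho_X1 (b p : ℂ) : rho b p (X 1) = L1 := by
  simp [rho, X, FreeAlgebra.lift_ι_apply]

lemma rho_X2 (b p : ℂ) : rho b p (X 2) = L2 b p := by
  simp [rho, X, FreeAlgebra.lift_ι_apply]

lemma rho_S (b p : ℂ) : ∀ ⦃x y : F⦄, rel b p x y → rho b p x = rho b p y := by
  rintro x y ⟨hx, rfl⟩
  rw [map_zero]
  simp only [S, Set.mem_insert_iff, Set.mem_singleton_iff] at hx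
  rcases hx with rfl | rfl | rfl | rfl | rfl | rfl <;>
    simp only [map_add, map_sub, map_mul, map_smul, rho_X0, rho_X1, rho_X2] <;>
    first
      | exact relL1
      | exact relL2 b p
      | exact relL3 b p
      | exact relL4
      | exact relL5
      | exact relL6 b p

def phi (b p : ℂ) : RingQuot (rel b p) →ₐ[ℂ] Module.End ℂ V8 :=
  RingQuot.liftAlgHom ℂ ⟨rho b p, rho_S b p⟩

def v0 : V8 := Pi.single ((0 : Fin 2), (0 : Fin 2), (0 : Fin 2)) 1

def gmap (b p : ℂ) : RingQuot (rel b p) →ₗ[ℂ] V8 :=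
  (LinearMap.applyₗ v0).comp (phi b p).toLinearMap

lemma gmap_fam (b p : ℂ) (e : Fin 2 × Fin 2 × Fin 2) :
    gmap b p (RingQuot.mkAlgHom ℂ (rel b p)
      (X 0 ^ (e.1 : ℕ) * X 1 ^ (e.2.1 : ℕ) * X 2 ^ (e.2.2 : ℕ))) = Pi.single e 1 := by
  obtain ⟨a, c, d⟩ := e
  have key : ∀ m : F, gmap b p (RingQuot.mkAlgHom ℂ (rel b p) m) = rho b p m v0 := by
    intro m
    simp [gmap, phi, RingQuot.liftAlgHom_mkAlgHom_apply]
  fin_cases a <;> fin_cases c <;> fin_cases d <;>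
    · rw [key]
      simp only [Fin.isValue, Fin.val_zero, Fin.val_one, pow_zero, pow_one, one_mul, mul_one,
        map_mul, map_one, rho_X0, rho_X1, rho_X2, Module.End.mul_apply, Module.End.one_apply]
      funext t
      obtain ⟨ta, tc, td⟩ := t
      fin_cases ta <;> fin_cases tc <;> fin_cases td <;>
        simp [L0, L1, L2, v0, Pi.single_apply]

/-! ### Linear independence -/

lemma li (b p : ℂ) :
    LinearIndependent ℂ (fun e : Fin 2 × Fin 2 × Fin 2 =>
      RingQuot.mkAlgHom ℂ (rel b p) (X 0 ^ (e.1 : ℕ) * X 1 ^ (e.2.1 : ℕ) * X 2 ^ (e.2.2 : ℕ))) := by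
  apply LinearIndependent.of_comp (gmap b p)
  have hcomp : (⇑(gmap b p) ∘ fun e : Fin 2 × Fin 2 × Fin 2 =>
      RingQuot.mkAlgHom ℂ (rel b p) (X 0 ^ (e.1 : ℕ) * X 1 ^ (e.2.1 : ℕ) * X 2 ^ (e.2.2 : ℕ)))
      = fun e => Pi.single e (1 : ℂ) := by
    funext e
    exact gmap_fam b p e
  rw [hcomp]
  have hb := (Pi.basisFun ℂ (Fin 2 × Fin 2 × Fin 2)).linearIndependent
  rwa [show ⇑(Pi.basisFun ℂ (Fin 2 × Fin 2 × Fin 2)) = fun e => Pi.single e (1 : ℂ) from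
    funext fun i => Pi.basisFun_apply ℂ _ i] at hb

/-! ### Relations in the quotient -/

section Relations

variable (b p : ℂ)

local notation "mk" => RingQuot.mkAlgHom ℂ (rel b p)

lemma mkS_zero {x : F} (hx : x ∈ S b p) : mk x = 0 := by
  have h := RingQuot.mkAlgHom_rel ℂ (s := rel b p) (x := x) (y := 0) ⟨hx, rfl⟩
  simpa using h

lemma h10 : mk (X 1) * mk (X 0) = (-1 : ℂ) • (mk (X 0) * mk (X 1)) := by
  have h := mkS_zero b p (x := X 1 * X 0 + X 0 * X 1) (Set.mem_insert _ _)
  rw [map_add, map_mul, map_mul] at h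
  exact (eq_neg_of_add_eq_zero_left h).trans (neg_one_smul ℂ _).symm

lemma h20 : mk (X 2) * mk (X 0) = (-1 : ℂ) • (mk (X 0) * mk (X 2)) := by
  have h := mkS_zero b p (x := X 2 * X 0 + X 0 * X 2)
    (Set.mem_insert_of_mem _ (Set.mem_insert _ _))
  rw [map_add, map_mul, map_mul] at h
  exact (eq_neg_of_add_eq_zero_left h).trans (neg_one_smul ℂ _).symm

lemma h21 : mk (X 2) * mk (X 1) = b • (mk (X 0) * mk (X 1)) - mk (X 1) * mk (X 2) := by
  have h := mkS_zero b p (x := X 2 * X 1 + X 1 * X 2 - b • (X 0 * X 1))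
    (Set.mem_insert_of_mem _ (Set.mem_insert_of_mem _ (Set.mem_insert _ _)))
  rw [map_sub, map_add, map_mul, map_mul, map_smul, map_mul, sub_eq_zero] at h
  exact eq_sub_of_add_eq h

lemma h00 : mk (X 0) * mk (X 0) = 0 := by
  have h := mkS_zero b p (x := X 0 * X 0)
    (Set.mem_insert_of_mem _ (Set.mem_insert_of_mem _ (Set.mem_insert_of_mem _
      (Set.mem_insert _ _))))
  rwa [map_mul] at h

lemma h11 : mk (X 1) * mk (X 1) = 0 := by
  have h := mkS_zero b p (x := X 1 * X 1)
    (Set.mem_insert_of_mem _ (Set.mem_insert_of_mem _ (Set.mem_insert_of_mem _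
      (Set.mem_insert_of_mem _ (Set.mem_insert _ _)))))
  rwa [map_mul] at h

lemma h22 : mk (X 2) * mk (X 2) = b • (mk (X 0) * mk (X 2)) - p • (mk (X 0) * mk (X 1)) := by
  have h := mkS_zero b p (x := X 2 * X 2 - b • (X 0 * X 2) + p • (X 0 * X 1))
    (Set.mem_insert_of_mem _ (Set.mem_insert_of_mem _ (Set.mem_insert_of_mem _
      (Set.mem_insert_of_mem _ (Set.mem_insert_of_mem _ rfl)))))
  rw [map_add, map_sub, map_mul, map_smul, map_mul, map_smul, map_mul,
    sub_add_eq_add_sub, sub_eq_zero] at h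
  exact eq_sub_of_add_eq h

lemma h10' (z : RingQuot (rel b p)) :
    mk (X 1) * (mk (X 0) * z) = (-1 : ℂ) • (mk (X 0) * (mk (X 1) * z)) := by
  rw [← mul_assoc, h10, smul_mul_assoc, mul_assoc]

lemma h20' (z : RingQuot (rel b p)) :
    mk (X 2) * (mk (X 0) * z) = (-1 : ℂ) • (mk (X 0) * (mk (X 2) * z)) := by
  rw [← mul_assoc, h20, smul_mul_assoc, mul_assoc]

lemma h21' (z : RingQuot (rel b p)) :
    mk (X 2) * (mk (X 1) * z)
      = b • (mk (X 0) * (mk (X 1) * z)) - mk (X 1) * (mk (X 2) * z) := by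
  rw [← mul_assoc, h21, sub_mul, smul_mul_assoc, mul_assoc, mul_assoc]

lemma h00' (z : RingQuot (rel b p)) : mk (X 0) * (mk (X 0) * z) = 0 := by
  rw [← mul_assoc, h00, zero_mul]

lemma h11' (z : RingQuot (rel b p)) : mk (X 1) * (mk (X 1) * z) = 0 := by
  rw [← mul_assoc, h11, zero_mul]

lemma h22' (z : RingQuot (rel b p)) :
    mk (X 2) * (mk (X 2) * z)
      = b • (mk (X 0) * (mk (X 2) * z)) - p • (mk (X 0) * (mk (X 1) * z)) := by
  rw [← mul_assoc, h22, sub_mul, smul_mul_assoc, smul_mul_assoc, mul_assoc, mul_assoc]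

end Relations

/-! ### Spanning -/

lemma span_top (b p : ℂ) :
    Submodule.span ℂ (Set.range (fun e : Fin 2 × Fin 2 × Fin 2 =>
      RingQuot.mkAlgHom ℂ (rel b p)
        (X 0 ^ (e.1 : ℕ) * X 1 ^ (e.2.1 : ℕ) * X 2 ^ (e.2.2 : ℕ)))) = ⊤ := by
  set M := Submodule.span ℂ (Set.range (fun e : Fin 2 × Fin 2 × Fin 2 =>
      RingQuot.mkAlgHom ℂ (rel b p)
        (X 0 ^ (e.1 : ℕ) * X 1 ^ (e.2.1 : ℕ) * X 2 ^ (e.2.2 : ℕ)))) with hM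
  have memb : ∀ e : Fin 2 × Fin 2 × Fin 2,
      RingQuot.mkAlgHom ℂ (rel b p)
        (X 0 ^ (e.1 : ℕ) * X 1 ^ (e.2.1 : ℕ) * X 2 ^ (e.2.2 : ℕ)) ∈ M :=
    fun e => Submodule.subset_span ⟨e, rfl⟩
  have hone : (1 : RingQuot (rel b p)) ∈ M := by
    have h := memb (0, 0, 0); simpa using h
  have hm0 : RingQuot.mkAlgHom ℂ (rel b p) (X 0) ∈ M := by
    have h := memb (1, 0, 0); simpa using h
  have hm1 : RingQuot.mkAlgHom ℂ (rel b p) (X 1) ∈ M := by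
    have h := memb (0, 1, 0); simpa using h
  have hm2 : RingQuot.mkAlgHom ℂ (rel b p) (X 2) ∈ M := by
    have h := memb (0, 0, 1); simpa using h
  have hm01 : RingQuot.mkAlgHom ℂ (rel b p) (X 0) * RingQuot.mkAlgHom ℂ (rel b p) (X 1) ∈ M := by
    have h := memb (1, 1, 0); simpa using h
  have hm02 : RingQuot.mkAlgHom ℂ (rel b p) (X 0) * RingQuot.mkAlgHom ℂ (rel b p) (X 2) ∈ M := by
    have h := memb (1, 0, 1); simpa using h
  have hm12 : RingQuot.mkAlgHom ℂ (rel b p) (X 1) * RingQuot.mkAlgHom ℂ (rel b p) (X 2) ∈ M := by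
    have h := memb (0, 1, 1); simpa using h
  have hm012 : RingQuot.mkAlgHom ℂ (rel b p) (X 0) *
      (RingQuot.mkAlgHom ℂ (rel b p) (X 1) * RingQuot.mkAlgHom ℂ (rel b p) (X 2)) ∈ M := by
    have h := memb (1, 1, 1); simpa [mul_assoc] using h
  -- right multiplication by a generator stays in M
  have hstep : ∀ v ∈ M, ∀ i : Fin 3, v * RingQuot.mkAlgHom ℂ (rel b p) (X i) ∈ M := by
    intro v hv i
    induction hv using Submodule.span_induction with
    | mem x hx =>
      obtain ⟨e, rfl⟩ := hx
      obtain ⟨a, c, d⟩ := e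
      fin_cases a <;> fin_cases c <;> fin_cases d <;> fin_cases i <;>
        · simp only [Fin.isValue, Fin.mk_zero, Fin.mk_one,
            show (⟨2, by omega⟩ : Fin 3) = 2 from rfl,
            Fin.val_zero, Fin.val_one, pow_zero, pow_one, one_mul,
            mul_one, map_mul, map_one, mul_assoc,
            h10 b p, h10' b p, h20 b p, h20' b p, h21 b p, h21' b p,
            h00 b p, h00' b p, h11 b p, h11' b p, h22 b p, h22' b p,
            mul_sub, sub_mul, mul_smul_comm, smul_mul_assoc, smul_smul,
            mul_zero, zero_mul, smul_zero, sub_zero, zero_sub, sub_self]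
          solve_by_elim (maxDepth := 8)
            [hone, hm0, hm1, hm2, hm01, hm02, hm12, hm012,
             Submodule.neg_mem, Submodule.smul_mem, Submodule.sub_mem, Submodule.add_mem,
             Submodule.zero_mem]
    | zero => simpa using Submodule.zero_mem M
    | add x y hx hy ihx ihy => rw [add_mul]; exact Submodule.add_mem M ihx ihy
    | smul a x hx ih => rw [smul_mul_assoc]; exact Submodule.smul_mem M a ih
  -- multiplication closure
  have hmul : ∀ v ∈ M, ∀ w ∈ M, v * w ∈ M := by
    intro v hv w hw
    induction hw using Submodule.span_induction with
    | mem x hx =>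
      obtain ⟨e, rfl⟩ := hx
      obtain ⟨a, c, d⟩ := e
      fin_cases a <;> fin_cases c <;> fin_cases d <;>
        · simp only [Fin.isValue, Fin.val_zero, Fin.val_one, pow_zero, pow_one, one_mul,
            mul_one, map_mul, map_one, ← mul_assoc]
          solve_by_elim (maxDepth := 8) [hstep, hv]
    | zero => simpa using Submodule.zero_mem M
    | add x y hx hy ihx ihy => rw [mul_add]; exact Submodule.add_mem M ihx ihy
    | smul a x hx ih => rw [mul_smul_comm]; exact Submodule.smul_mem M a ih
  have htop : ∀ a : F, RingQuot.mkAlgHom ℂ (rel b p) a ∈ M := by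
    intro a
    refine FreeAlgebra.induction ℂ (Fin 3)
      (motive := fun a => RingQuot.mkAlgHom ℂ (rel b p) a ∈ M) ?_ ?_ ?_ ?_ a
    · intro r
      rw [AlgHom.commutes, Algebra.algebraMap_eq_smul_one]
      exact Submodule.smul_mem M r hone
    · intro x
      rw [show FreeAlgebra.ι ℂ x = X x from rfl]
      fin_cases x
      · exact hm0
      · exact hm1
      · exact hm2
    · intro a b ha hb
      rw [map_mul]
      exact hmul _ ha _ hb
    · intro a b ha hb
      rw [map_add]
      exact Submodule.add_mem M ha hb
  rw [eq_top_iff]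
  rintro q -
  obtain ⟨a, rfl⟩ := RingQuot.mkAlgHom_surjective ℂ (rel b p) q
  exact htop a

end NicholsAux

/-- `F/I` has `ℂ`-dimension 8 and the images of the eight monomials `x₁^{e₁} x₂^{e₂} x₃^{e₃}`, `eᵢ ∈ {0,1}`, form a `ℂ`-basis. -/
theorem dim_eight_R11_t_neg_one (b p : ℂ) :
    Module.finrank ℂ (RingQuot (rel b p)) = 8 ∧
    LinearIndependent ℂ (fun e : Fin 2 × Fin 2 × Fin 2 =>
      RingQuot.mkAlgHom ℂ (rel b p) (X 0 ^ (e.1 : ℕ) * X 1 ^ (e.2.1 : ℕ) * X 2 ^ (e.2.2 : ℕ))) ∧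
    Submodule.span ℂ (Set.range (fun e : Fin 2 × Fin 2 × Fin 2 =>
      RingQuot.mkAlgHom ℂ (rel b p) (X 0 ^ (e.1 : ℕ) * X 1 ^ (e.2.1 : ℕ) * X 2 ^ (e.2.2 : ℕ)))) = ⊤ := by
  refine ⟨?_, li b p, span_top b p⟩
  have B := Module.Basis.mk (li b p) (by rw [span_top b p])
  rw [Module.finrank_eq_card_basis B]
  simp
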